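/- Let P be a strong Feller Markov kernel on a Polish space X. If there exists a point x ∈ X such that x belongs to the topological support of every invariant probability measure for P, then P has at most one invariant probability measure. -/

import Mathlib

open MeasureTheory ProbabilityTheory Filter
open scoped ENNReal

/-- A Markov kernel is *strong Feller* if it maps bounded measurable functions to
continuous functions. -/
def StrongFeller {X : Type*} [MeasurableSpace X] [TopologicalSpace X] (P : Kernel X X) : Prop :=
  ∀ f : X → ℝ, Measurable f → (∃ C, ∀ x, |f x| ≤ C) →
    Continuous fun x => ∫ y, f y ∂(P x)

/-- The topological support of a measure: the set of points all of whose neighbourhoods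
have positive measure (equivalently, the smallest closed set of full measure). -/
def msupport {X : Type*} [TopologicalSpace X] [MeasurableSpace X]
    (μ : Measure X) : Set X :=
  {x | ∀ U ∈ nhds x, 0 < μ U}

/-- A measure `μ` is invariant for the kernel `P` if `∫ P(x,·) μ(dx) = μ`. -/
def Invariant {X : Type*} [MeasurableSpace X] (P : Kernel X X) (μ : Measure X) : Prop :=
  μ.bind (fun x => P x) = μ

/-- Let `P` be a strong Feller Markov kernel on a Polish space `X`. If there exists a point
`x ∈ X` belonging to the topological support of every invariant probability measure for `P`,
then `P` has at most one invariant probability measure. -/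
lemma key_lemma {X : Type*} [TopologicalSpace X] [MeasurableSpace X] [BorelSpace X]
    (P : Kernel X X) [IsMarkovKernel P] (hP : StrongFeller P)
    (ρ₁ ρ₂ : Measure X) [IsProbabilityMeasure ρ₁] [IsProbabilityMeasure ρ₂]
    (h₁ : Invariant P ρ₁) (h₂ : Invariant P ρ₂)
    {S : Set X} (hS : MeasurableSet S) (hρ₁ : ρ₁ S = 1) (hρ₂ : ρ₂ S = 0)
    {x : X} (hx₁ : x ∈ msupport ρ₁) (hx₂ : x ∈ msupport ρ₂) : False := by
  set f : X → ℝ := fun z => (P z S).toReal with hf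
  have hfc : Continuous f := by
    have := hP (S.indicator (1 : X → ℝ)) (measurable_one.indicator hS)
      ⟨1, fun z => by
        by_cases h : z ∈ S <;> simp [Set.indicator_apply, h]⟩
    have heq : (fun z => ∫ y, S.indicator (1 : X → ℝ) y ∂(P z)) = f := by
      funext z
      simp [hf, MeasureTheory.integral_indicator_one hS, measureReal_def]
    rwa [heq] at this
  -- a.e. identities
  have hb₁ : ∫⁻ z, P z S ∂ρ₁ = 1 := by
    rw [← Measure.bind_apply hS P.measurable.aemeasurable, h₁, hρ₁]
  have hb₂ : ∫⁻ z, P z S ∂ρ₂ = 0 := by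
    rw [← Measure.bind_apply hS P.measurable.aemeasurable, h₂, hρ₂]
  have hae₂ : ∀ᵐ z ∂ρ₂, P z S = 0 := by
    have := (lintegral_eq_zero_iff (P.measurable_coe hS)).mp hb₂
    filter_upwards [this] with z hz using hz
  have hae₁ : ∀ᵐ z ∂ρ₁, P z S = 1 := by
    have hone : ∫⁻ z, (1 : ℝ≥0∞) ∂ρ₁ = 1 := by simp
    have hle : ∀ z, P z S ≤ 1 := fun z => prob_le_one
    have hsub : ∫⁻ z, (1 - P z S) ∂ρ₁ = 0 := by
      rw [lintegral_sub (P.measurable_coe hS) (by simp [hb₁])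
        (Filter.Eventually.of_forall hle), hone, hb₁, tsub_self]
    have := (lintegral_eq_zero_iff (measurable_const.sub (P.measurable_coe hS))).mp hsub
    filter_upwards [this] with z hz
    have : (1:ℝ≥0∞) ≤ P z S := by
      have := hz
      simp only [Pi.zero_apply] at this
      exact tsub_eq_zero_iff_le.mp this
    exact le_antisymm (hle z) this
  -- continuity plus a.e. gives values on supports
  have hfx1 : f x = 1 := by
    by_contra h
    have hopen : IsOpen {z | f z ≠ 1} := (isClosed_eq hfc continuous_const).isOpen_compl
    have hmem : {z | f z ≠ 1} ∈ nhds x := hopen.mem_nhds h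
    have h0 : ρ₁ {z | f z ≠ 1} = 0 := by
      have : ∀ᵐ z ∂ρ₁, f z = 1 := by
        filter_upwards [hae₁] with z hz
        simp [hf, hz]
      exact this
    exact absurd (hx₁ _ hmem) (by simp [h0])
  have hfx2 : f x = 0 := by
    by_contra h
    have hopen : IsOpen {z | f z ≠ 0} := (isClosed_eq hfc continuous_const).isOpen_compl
    have hmem : {z | f z ≠ 0} ∈ nhds x := hopen.mem_nhds h
    have h0 : ρ₂ {z | f z ≠ 0} = 0 := by
      have : ∀ᵐ z ∂ρ₂, f z = 0 := by
        filter_upwards [hae₂] with z hz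
        simp [hf, hz]
      exact this
    exact absurd (hx₂ _ hmem) (by simp [h0])
  rw [hfx1] at hfx2
  norm_num at hfx2

lemma bind_add' {X : Type*} [MeasurableSpace X] (P : Kernel X X) (a b : Measure X) :
    (a + b).bind (fun y => P y) = a.bind (fun y => P y) + b.bind (fun y => P y) :=
  Measure.ext fun s hs => by
    rw [Measure.add_apply, Measure.bind_apply hs P.measurable.aemeasurable,
      Measure.bind_apply hs P.measurable.aemeasurable, Measure.bind_apply hs P.measurable.aemeasurable,
      lintegral_add_measure]

lemma bind_smul' {X : Type*} [MeasurableSpace X] (P : Kernel X X) (c : ℝ≥0∞) (a : Measure X) :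
    (c • a).bind (fun y => P y) = c • a.bind (fun y => P y) :=
  Measure.ext fun s hs => by
    rw [Measure.smul_apply, Measure.bind_apply hs P.measurable.aemeasurable,
      Measure.bind_apply hs P.measurable.aemeasurable, lintegral_smul_measure, smul_eq_mul]

lemma bind_univ' {X : Type*} [MeasurableSpace X] (P : Kernel X X) [IsMarkovKernel P]
    (a : Measure X) : a.bind (fun y => P y) Set.univ = a Set.univ := by
  rw [Measure.bind_apply MeasurableSet.univ P.measurable.aemeasurable]
  simp

theorem unique_invariant_of_common_support_point
    {X : Type*} [TopologicalSpace X] [PolishSpace X] [MeasurableSpace X] [BorelSpace X]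
    (P : Kernel X X) [IsMarkovKernel P] (hP : StrongFeller P)
    (hx : ∃ x : X, ∀ μ : Measure X, IsProbabilityMeasure μ → Invariant P μ → x ∈ msupport μ)
    (μ ν : Measure X) [IsProbabilityMeasure μ] [IsProbabilityMeasure ν]
    (hμ : Invariant P μ) (hν : Invariant P ν) :
    μ = ν := by
  by_contra hne
  obtain ⟨x, hx⟩ := hx
  obtain ⟨S, hS, hSle, hScle⟩ := hahn_decomposition (μ := μ) (ν := ν)
  set ηp := μ.restrict S - ν.restrict S with hηpdef
  set ηm := ν.restrict Sᶜ - μ.restrict Sᶜ with hηmdef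
  have hle1 : ν.restrict S ≤ μ.restrict S := Measure.le_iff.mpr fun A hA => by
    rw [Measure.restrict_apply hA, Measure.restrict_apply hA]
    exact hSle _ (hA.inter hS) Set.inter_subset_right
  have hle2 : μ.restrict Sᶜ ≤ ν.restrict Sᶜ := Measure.le_iff.mpr fun A hA => by
    rw [Measure.restrict_apply hA, Measure.restrict_apply hA]
    exact hScle _ (hA.inter hS.compl) Set.inter_subset_right
  have hηp_apply : ∀ A, MeasurableSet A → ηp A = μ (A ∩ S) - ν (A ∩ S) := fun A hA => by
    rw [hηpdef, Measure.sub_apply hA hle1, Measure.restrict_apply hA, Measure.restrict_apply hA]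
  have hηm_apply : ∀ A, MeasurableSet A → ηm A = ν (A ∩ Sᶜ) - μ (A ∩ Sᶜ) := fun A hA => by
    rw [hηmdef, Measure.sub_apply hA hle2, Measure.restrict_apply hA, Measure.restrict_apply hA]
  -- key decomposition identity
  have hkey : μ + ηm = ν + ηp := Measure.ext fun A hA => by
    have hca : ν (A ∩ S) ≤ μ (A ∩ S) := hSle _ (hA.inter hS) Set.inter_subset_right
    have hbd : μ (A ∩ Sᶜ) ≤ ν (A ∩ Sᶜ) := hScle _ (hA.inter hS.compl) Set.inter_subset_right
    have hμA : μ A = μ (A ∩ S) + μ (A ∩ Sᶜ) := by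
      rw [← measure_inter_add_diff A hS, Set.diff_eq]
    have hνA : ν A = ν (A ∩ S) + ν (A ∩ Sᶜ) := by
      rw [← measure_inter_add_diff A hS, Set.diff_eq]
    rw [Measure.add_apply, Measure.add_apply, hηm_apply A hA, hηp_apply A hA, hμA, hνA]
    set a := μ (A ∩ S); set b := μ (A ∩ Sᶜ); set c := ν (A ∩ S); set d := ν (A ∩ Sᶜ)
    calc a + b + (d - b) = a + (b + (d - b)) := by ring
      _ = a + d := by rw [add_tsub_cancel_of_le hbd]
      _ = (c + (a - c)) + d := by rw [add_tsub_cancel_of_le hca]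
      _ = c + d + (a - c) := by ring
  have hbind : μ + ηm.bind (fun y => P y) = ν + ηp.bind (fun y => P y) := by
    have h := congrArg (fun m : Measure X => m.bind (fun y => P y)) hkey
    simp only [bind_add' P] at h
    rwa [hμ, hν] at h
  have hηpS : ηp Sᶜ = 0 := by
    rw [hηp_apply _ hS.compl]
    simp [Set.inter_comm, Set.inter_compl_self]
  have hfinp : ∀ A, ηp A ≠ ∞ := fun A => by
    have : ηp A ≤ μ.restrict S A := (Measure.sub_le (μ := μ.restrict S) (ν := ν.restrict S)) A
    exact (lt_of_le_of_lt this (measure_lt_top _ _)).ne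
  have hfinm : ∀ A, ηm A ≠ ∞ := fun A => by
    have : ηm A ≤ ν.restrict Sᶜ A := (Measure.sub_le (μ := ν.restrict Sᶜ) (ν := μ.restrict Sᶜ)) A
    exact (lt_of_le_of_lt this (measure_lt_top _ _)).ne
  -- ηp is invariant
  have hp_le : ∀ A, MeasurableSet A → ηp A ≤ ηp.bind (fun y => P y) A := fun A hA => by
    have hsplit : ηp A = ηp (A ∩ S) := by
      have h0 : ηp (A ∩ Sᶜ) = 0 := measure_mono_null Set.inter_subset_right hηpS
      have := measure_inter_add_diff A hS (μ := ηp)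
      rw [Set.diff_eq] at this
      rw [← this, h0, add_zero]
    have hBapp : μ (A ∩ S) + ηm.bind (fun y => P y) (A ∩ S)
        = ν (A ∩ S) + ηp.bind (fun y => P y) (A ∩ S) := by
      have := congrArg (fun m : Measure X => m (A ∩ S)) hbind
      simpa [Measure.add_apply] using this
    have h1 : μ (A ∩ S) ≤ ν (A ∩ S) + ηp.bind (fun y => P y) (A ∩ S) := by
      rw [← hBapp]; exact le_add_right le_rfl
    have h2 : ηp (A ∩ S) ≤ ηp.bind (fun y => P y) (A ∩ S) := by
      rw [hηp_apply _ (hA.inter hS), Set.inter_assoc, Set.inter_self]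
      exact tsub_le_iff_right.mpr (by rwa [add_comm] at h1)
    calc ηp A = ηp (A ∩ S) := hsplit
      _ ≤ ηp.bind (fun y => P y) (A ∩ S) := h2
      _ ≤ ηp.bind (fun y => P y) A := measure_mono Set.inter_subset_left
  have hp_inv : ηp.bind (fun y => P y) = ηp := Measure.ext fun A hA => by
    refine le_antisymm ?_ (hp_le A hA)
    have h1 : ηp A + ηp Aᶜ = ηp Set.univ := measure_add_measure_compl hA
    have h2 : ηp.bind (fun y => P y) A + ηp.bind (fun y => P y) Aᶜ = ηp Set.univ := by
      rw [measure_add_measure_compl hA, bind_univ' P]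
    have h3 : ηp.bind (fun y => P y) A + ηp Aᶜ
        ≤ ηp A + ηp Aᶜ := by
      calc ηp.bind (fun y => P y) A + ηp Aᶜ
          ≤ ηp.bind (fun y => P y) A + ηp.bind (fun y => P y) Aᶜ :=
            add_le_add le_rfl (hp_le Aᶜ hA.compl)
        _ = ηp A + ηp Aᶜ := h2.trans h1.symm
    exact (ENNReal.add_le_add_iff_right (hfinp Aᶜ)).mp h3
  have hm_inv : ηm.bind (fun y => P y) = ηm := Measure.ext fun A hA => by
    have h1 : μ A + ηm.bind (fun y => P y) A = ν A + ηp A := by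
      simpa [Measure.add_apply, hp_inv] using congrArg (fun m : Measure X => m A) hbind
    have h2 : μ A + ηm A = ν A + ηp A := by
      simpa [Measure.add_apply] using congrArg (fun m : Measure X => m A) hkey
    exact (ENNReal.add_right_inj (measure_ne_top μ A)).mp (h1.trans h2.symm)
  -- masses
  set c := ηp Set.univ with hc
  have hmasses : ηm Set.univ = c := by
    have h := congrArg (fun m : Measure X => m Set.univ) hkey
    simp only [Measure.add_apply, measure_univ] at h
    exact (ENNReal.add_right_inj ENNReal.one_ne_top).mp h
  have hc0 : c ≠ 0 := by
    intro h0
    apply hne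
    have hp0 : ηp = 0 := Measure.measure_univ_eq_zero.mp h0
    have hm0 : ηm = 0 := Measure.measure_univ_eq_zero.mp (hmasses.trans h0)
    have := hkey
    rw [hp0, hm0, add_zero, add_zero] at this
    exact this
  have hcfin : c ≠ ∞ := hfinp _
  -- normalized measures
  set ρ₁ := c⁻¹ • ηp with hρ₁def
  set ρ₂ := c⁻¹ • ηm with hρ₂def
  haveI : IsProbabilityMeasure ρ₁ :=
    ⟨by rw [hρ₁def, Measure.smul_apply, smul_eq_mul, ← hc, ENNReal.inv_mul_cancel hc0 hcfin]⟩
  haveI : IsProbabilityMeasure ρ₂ :=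
    ⟨by rw [hρ₂def, Measure.smul_apply, smul_eq_mul, hmasses, ENNReal.inv_mul_cancel hc0 hcfin]⟩
  have hinv₁ : Invariant P ρ₁ := by
    rw [Invariant, hρ₁def, bind_smul' P, hp_inv]
  have hinv₂ : Invariant P ρ₂ := by
    rw [Invariant, hρ₂def, bind_smul' P, hm_inv]
  have hρ₁S : ρ₁ S = 1 := by
    have hpS : ηp S = c := by
      rw [hηp_apply S hS, hc, hηp_apply Set.univ MeasurableSet.univ]
      simp [Set.inter_self, Set.univ_inter]
    rw [hρ₁def, Measure.smul_apply, smul_eq_mul, hpS, ENNReal.inv_mul_cancel hc0 hcfin]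
  have hρ₂S : ρ₂ S = 0 := by
    have hmS : ηm S = 0 := by
      rw [hηm_apply S hS]
      simp [Set.inter_compl_self]
    rw [hρ₂def, Measure.smul_apply, smul_eq_mul, hmS, mul_zero]
  exact key_lemma P hP ρ₁ ρ₂ hinv₁ hinv₂ hS hρ₁S hρ₂S
    (hx ρ₁ inferInstance hinv₁) (hx ρ₂ inferInstance hinv₂)
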